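/- Let p be a prime and r ≥ 1 an integer. Define a_p(p^r) = (1 + (p-1)r)/(p(p^r - 1)) and a(p^r) = p/(p^r (p-1)) (the Malle constant for the elementary abelian group C_p^r, whose smallest prime divisor of the order is p). Then a_p(p^r) = a(p^r) if (p,r) = (p,1) for any prime p or (p,r) = (2,2), and a_p(p^r) > a(p^r) in all other cases (i.e., r ≥ 2 and (p,r) ≠ (2,2)). -/

import Mathlib

theorem stmt_0 (p r : ℕ) (hp : p.Prime) (hr : 1 ≤ r) :
    (((r = 1 ∨ (p = 2 ∧ r = 2)) →
        (1 + ((p : ℚ) - 1) * r) / (p * ((p : ℚ) ^ r - 1)) =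
          (p : ℚ) / ((p : ℚ) ^ r * ((p : ℚ) - 1))) ∧
      ((2 ≤ r ∧ ¬(p = 2 ∧ r = 2)) →
        (1 + ((p : ℚ) - 1) * r) / (p * ((p : ℚ) ^ r - 1)) >
          (p : ℚ) / ((p : ℚ) ^ r * ((p : ℚ) - 1)))) := by
  have hq : (2:ℚ) ≤ (p:ℚ) := by exact_mod_cast hp.two_le
  have hq1 : (1:ℚ) < (p:ℚ) := by linarith
  constructor
  · rintro (rfl | ⟨rfl, rfl⟩)
    · have h1 : (p:ℚ) - 1 ≠ 0 := by linarith
      have h0 : (p:ℚ) ≠ 0 := by linarith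
      rw [pow_one]
      field_simp
      push_cast; ring
    · norm_num
  · rintro ⟨hr2, hne⟩
    have hrq : (2:ℚ) ≤ (r:ℚ) := by exact_mod_cast hr2
    have hpow : (1:ℚ) < (p:ℚ) ^ r := one_lt_pow₀ hq1 (by omega)
    have hd1 : (0:ℚ) < (p:ℚ) * ((p:ℚ) ^ r - 1) :=
      mul_pos (by linarith) (by linarith)
    have hd2 : (0:ℚ) < (p:ℚ) ^ r * ((p:ℚ) - 1) := by
      have : (0:ℚ) < (p:ℚ) ^ r := by positivity
      have : (0:ℚ) < (p:ℚ) - 1 := by linarith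
      positivity
    rw [gt_iff_lt, div_lt_div_iff₀ hd2 hd1]
    have key : (p:ℚ)^2 ≤ (1 + ((p:ℚ) - 1) * r) * ((p:ℚ) - 1) := by
      rcases eq_or_ne p 2 with hp2 | hp2
      · subst hp2
        have hr3 : 3 ≤ r := by omega
        have : (3:ℚ) ≤ (r:ℚ) := by exact_mod_cast hr3
        norm_num
        linarith
      · have hp3 : 3 ≤ p := by
          have := hp.two_le; omega
        have hq3 : (3:ℚ) ≤ (p:ℚ) := by exact_mod_cast hp3
        nlinarith [mul_nonneg (by linarith : (0:ℚ) ≤ (r:ℚ) - 2) (sq_nonneg ((p:ℚ) - 1)),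
          mul_nonneg (by linarith : (0:ℚ) ≤ (p:ℚ) - 3) (by linarith : (0:ℚ) ≤ (p:ℚ))]
    have hpr : (0:ℚ) < (p:ℚ) ^ r := by positivity
    nlinarith [mul_le_mul_of_nonneg_right key hpr.le, sq_nonneg (p:ℚ)]
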